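/- Let d ≥ 1 and let M be a multi-measurement on ℂ^d with finite outcome set B and finite setting set Y. Then M is classical if and only if there exist a finite index set Λ', positive semidefinite d×d matrices G'_μ with ∑_μ G'_μ = 1, and points D_μ which are extreme points of the noncontextual measurement-assignment polytope 𝕡_M (i.e. D_μ ∈ 𝕡_M and whenever D_μ lies strictly between two points of 𝕡_M both of them equal D_μ), such that M_{b|y} = ∑_{μ∈Λ'} D_μ(b,y) • G'_μ for all b ∈ B and y ∈ Y. -/

import Mathlib

open Matrix BigOperators
open scoped ComplexOrder

noncomputable section

/-- The noncontextual measurement-assignment polytope of a multi-measurement. -/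
def multiPolytope {d : ℕ} {B Y : Type*} [Fintype B] [Fintype Y]
    (M : B × Y → Matrix (Fin d) (Fin d) ℂ) : Set (B × Y → ℝ) :=
  {q | (∀ p, 0 ≤ q p) ∧ (∀ y : Y, ∑ b : B, q (b, y) = 1) ∧
    ∀ β : B × Y → ℝ, (∑ p : B × Y, β p • M p = 0) → (∑ p : B × Y, β p * q p = 0)}

/-- A multi-measurement is classical. -/
def IsClassicalMulti {d : ℕ} {B Y : Type*} [Fintype B] [Fintype Y]
    (M : B × Y → Matrix (Fin d) (Fin d) ℂ) : Prop :=
  ∃ (n : ℕ) (G : Fin n → Matrix (Fin d) (Fin d) ℂ) (q : Fin n → B × Y → ℝ),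
    (∀ l, (G l).PosSemidef) ∧ (∑ l, G l = 1) ∧
    (∀ l, q l ∈ multiPolytope M) ∧
    (∀ b : B, ∀ y : Y, M (b, y) = ∑ l, q l (b, y) • G l)

section Helpers

open Finset

lemma posSemidef_real_smul {d : ℕ} {A : Matrix (Fin d) (Fin d) ℂ} (hA : A.PosSemidef)
    {c : ℝ} (hc : 0 ≤ c) : (c • A).PosSemidef := by
  have hAc : c • A = (c : ℂ) • A := by
    ext i j; simp [Matrix.smul_apply, Complex.real_smul]
  rw [hAc]
  refine ⟨?_, fun x => ?_⟩
  · have h1 := hA.1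
    unfold Matrix.IsHermitian at *
    rw [Matrix.conjTranspose_smul, h1]
    congr 1
    simp
  · exact (hA.smul (Complex.zero_le_real.mpr hc)).2 x

variable {d : ℕ} {B Y : Type*} [Fintype B] [Fintype Y]

lemma line_mem (M : B × Y → Matrix (Fin d) (Fin d) ℂ) (x v : B × Y → ℝ)
    (hx : x ∈ multiPolytope M)
    (hsumv : ∀ y : Y, ∑ b : B, v (b, y) = 0)
    (hbetav : ∀ β : B × Y → ℝ, (∑ p : B × Y, β p • M p = 0) → ∑ p : B × Y, β p * v p = 0)
    (t : ℝ) (hnn : ∀ p, 0 ≤ x p + t * v p) :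
    (fun p => x p + t * v p) ∈ multiPolytope M := by
  obtain ⟨h1, h2, h3⟩ := hx
  refine ⟨hnn, fun y => ?_, fun β hβ => ?_⟩
  · simp only [Finset.sum_add_distrib, h2 y, ← Finset.mul_sum, hsumv y, mul_zero, add_zero]
  · have e1 := h3 β hβ
    have e2 := hbetav β hβ
    have : ∑ p : B × Y, β p * (x p + t * v p)
        = (∑ p : B × Y, β p * x p) + t * ∑ p : B × Y, β p * v p := by
      rw [Finset.mul_sum, ← Finset.sum_add_distrib]
      exact Finset.sum_congr rfl fun p _ => by ring
    rw [this, e1, e2, mul_zero, add_zero]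

lemma exists_neg_coord (v : B × Y → ℝ)
    (hsumv : ∀ y : Y, ∑ b : B, v (b, y) = 0) (p0 : B × Y) (h : v p0 ≠ 0) :
    ∃ p, v p < 0 := by
  by_contra h'
  push_neg at h'
  have hz := (Finset.sum_eq_zero_iff_of_nonneg (fun b _ => h' (b, p0.2))).mp (hsumv p0.2)
  exact h (by simpa using hz p0.1 (Finset.mem_univ _))

lemma mem_convexHull_extremePoints (M : B × Y → Matrix (Fin d) (Fin d) ℂ) :
    ∀ (n : ℕ) (x : B × Y → ℝ), x ∈ multiPolytope M →
      (Finset.univ.filter fun p => x p ≠ 0).card = n →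
      x ∈ convexHull ℝ ((multiPolytope M).extremePoints ℝ) := by
  classical
  intro n
  induction n using Nat.strong_induction_on with
  | _ n ih =>
  intro x hx hcard
  by_cases hex : x ∈ (multiPolytope M).extremePoints ℝ
  · exact subset_convexHull ℝ _ hex
  rw [mem_extremePoints] at hex
  push_neg at hex
  obtain ⟨y, hy, z, hz, hseg, hne⟩ := hex hx
  obtain ⟨a, b, ha, hb, hab, hxab⟩ := hseg
  have hxp : ∀ p, x p = a * y p + b * z p := fun p => by
    rw [← hxab]; simp
  have hyx : y ≠ x := by
    intro h; subst h
    refine hne rfl ?_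
    have hbz : b • z = b • y := by
      have : a • y + b • z = (a + b) • y := by rw [hab, one_smul, hxab]
      rw [add_smul] at this
      exact add_left_cancel this
    have := smul_right_injective (B × Y → ℝ) (ne_of_gt hb) hbz
    rw [this]
  have hyz : y ≠ z := by
    intro h
    apply hyx
    rw [← h] at hxab
    rw [← hxab, ← add_smul, hab, one_smul]
  set v : B × Y → ℝ := fun p => z p - y p with hvdef
  obtain ⟨hy1, hy2, hy3⟩ := hy
  obtain ⟨hz1, hz2, hz3⟩ := hz
  have hsumv : ∀ y' : Y, ∑ b' : B, v (b', y') = 0 := fun y' => by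
    simp [hvdef, Finset.sum_sub_distrib, hy2 y', hz2 y']
  have hbetav : ∀ β : B × Y → ℝ, (∑ p : B × Y, β p • M p = 0) →
      ∑ p : B × Y, β p * v p = 0 := fun β hβ => by
    simp only [hvdef, mul_sub]
    rw [Finset.sum_sub_distrib, hy3 β hβ, hz3 β hβ, sub_zero]
  have hvne : ∃ p, v p ≠ 0 := by
    by_contra h
    push_neg at h
    exact hyz (funext fun p => by have := h p; simp [hvdef, sub_eq_zero] at this; rw [this])
  have hzero : ∀ p, x p = 0 → v p = 0 := by
    intro p hp
    have h1 := hy1 p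
    have h2 := hz1 p
    have h3 := hxp p
    rw [hp] at h3
    have hy0 : y p = 0 := by nlinarith
    have hz0 : z p = 0 := by nlinarith
    simp [hvdef, hy0, hz0]
  have hxpos : ∀ p, v p ≠ 0 → 0 < x p := fun p h =>
    lt_of_le_of_ne (hx.1 p) (fun h0 => h (hzero p h0.symm))
  obtain ⟨p0, hp0⟩ := hvne
  have hexneg : ∃ p, v p < 0 := exists_neg_coord v hsumv p0 hp0
  have hexpos : ∃ p, 0 < v p := by
    obtain ⟨p, hp⟩ := exists_neg_coord (fun p => -v p)
      (fun y' => by simp [Finset.sum_neg_distrib, hsumv y']) p0 (by simpa using hp0)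
    exact ⟨p, by simpa using hp⟩
  set Sm : Finset (B × Y) := Finset.univ.filter (fun p => v p < 0) with hSmdef
  set Sp : Finset (B × Y) := Finset.univ.filter (fun p => 0 < v p) with hSpdef
  have hSm : Sm.Nonempty := ⟨hexneg.choose, by simp [hSmdef, hexneg.choose_spec]⟩
  have hSp : Sp.Nonempty := ⟨hexpos.choose, by simp [hSpdef, hexpos.choose_spec]⟩
  set tp := Sm.inf' hSm (fun p => x p / (-v p)) with htpdef
  set tm := Sp.inf' hSp (fun p => x p / v p) with htmdef
  have htp : 0 < tp := by
    rw [htpdef, Finset.lt_inf'_iff]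
    intro p hp
    rw [hSmdef, Finset.mem_filter] at hp
    exact div_pos (hxpos p (ne_of_lt hp.2)) (by linarith [hp.2])
  have htm : 0 < tm := by
    rw [htmdef, Finset.lt_inf'_iff]
    intro p hp
    rw [hSpdef, Finset.mem_filter] at hp
    exact div_pos (hxpos p (ne_of_gt hp.2)) hp.2
  have hxpnn : ∀ p, 0 ≤ x p + tp * v p := by
    intro p
    rcases lt_or_ge (v p) 0 with h | h
    · have h1 : tp ≤ x p / (-v p) := Finset.inf'_le _ (by simp [hSmdef, h])
      have h2 := (le_div_iff₀ (by linarith : (0:ℝ) < -v p)).mp h1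
      nlinarith
    · have := mul_nonneg htp.le h
      linarith [hx.1 p]
  have hxmnn : ∀ p, 0 ≤ x p + (-tm) * v p := by
    intro p
    rcases lt_or_ge 0 (v p) with h | h
    · have h1 : tm ≤ x p / v p := Finset.inf'_le _ (by simp [hSpdef, h])
      have h2 := (le_div_iff₀ h).mp h1
      nlinarith
    · nlinarith [hx.1 p, mul_nonneg htm.le (neg_nonneg.mpr h)]
  have hxpP := line_mem M x v hx hsumv hbetav tp hxpnn
  have hxmP := line_mem M x v hx hsumv hbetav (-tm) hxmnn
  -- strict support decrease, plus branch
  have hcardp : (Finset.univ.filter fun p => (fun p => x p + tp * v p) p ≠ 0).card < n := by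
    rw [← hcard]
    apply Finset.card_lt_card
    have hss : (Finset.univ.filter fun p => (fun p => x p + tp * v p) p ≠ 0)
        ⊆ (Finset.univ.filter fun p => x p ≠ 0) := by
      intro p hp
      simp only [Finset.mem_filter, Finset.mem_univ, true_and] at hp ⊢
      intro h0
      exact hp (by simp [h0, hzero p h0])
    rw [Finset.ssubset_iff_of_subset hss]
    obtain ⟨ps, hpsmem, hpseq⟩ := Finset.exists_mem_eq_inf' hSm (fun p => x p / (-v p))
    rw [hSmdef, Finset.mem_filter] at hpsmem
    have hvps : v ps ≠ 0 := ne_of_lt hpsmem.2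
    refine ⟨ps, by simp [ne_of_gt (hxpos ps hvps)], ?_⟩
    simp only [Finset.mem_filter, Finset.mem_univ, true_and, not_not]
    rw [← htpdef] at hpseq
    rw [hpseq]
    have hmul : x ps / -v ps * v ps = -x ps := by
      have h' : x ps / -v ps * v ps = -(x ps / -v ps * -v ps) := by ring
      rw [h', div_mul_cancel₀ _ (neg_ne_zero.mpr hvps)]
    rw [hmul]; ring
  have hcardm : (Finset.univ.filter fun p => (fun p => x p + (-tm) * v p) p ≠ 0).card < n := by
    rw [← hcard]
    apply Finset.card_lt_card
    have hss : (Finset.univ.filter fun p => (fun p => x p + (-tm) * v p) p ≠ 0)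
        ⊆ (Finset.univ.filter fun p => x p ≠ 0) := by
      intro p hp
      simp only [Finset.mem_filter, Finset.mem_univ, true_and] at hp ⊢
      intro h0
      exact hp (by simp [h0, hzero p h0])
    rw [Finset.ssubset_iff_of_subset hss]
    obtain ⟨ps, hpsmem, hpseq⟩ := Finset.exists_mem_eq_inf' hSp (fun p => x p / v p)
    rw [hSpdef, Finset.mem_filter] at hpsmem
    have hvps : v ps ≠ 0 := ne_of_gt hpsmem.2
    refine ⟨ps, by simp [ne_of_gt (hxpos ps hvps)], ?_⟩
    simp only [Finset.mem_filter, Finset.mem_univ, true_and, not_not]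
    rw [← htmdef] at hpseq
    rw [hpseq]
    have hmul : x ps / v ps * v ps = x ps := div_mul_cancel₀ _ hvps
    rw [neg_mul, hmul]
    ring
  have hxpH := ih _ hcardp _ hxpP rfl
  have hxmH := ih _ hcardm _ hxmP rfl
  have hs : (0:ℝ) < tm + tp := by linarith
  have hcvx := convex_convexHull ℝ ((multiPolytope M).extremePoints ℝ)
  have hcomb := hcvx hxpH hxmH (le_of_lt (div_pos htm hs)) (le_of_lt (div_pos htp hs))
    (by field_simp)
  convert hcomb using 1
  funext p
  simp only [Pi.add_apply, Pi.smul_apply, smul_eq_mul]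
  field_simp
  ring

end Helpers

set_option maxHeartbeats 2000000 in
theorem classical_iff_extreme_point_decomposition
    {d : ℕ} (hd : 1 ≤ d) {B Y : Type*} [Fintype B] [Fintype Y]
    (M : B × Y → Matrix (Fin d) (Fin d) ℂ)
    (hpsd : ∀ p, (M p).PosSemidef)
    (hnorm : ∀ y : Y, ∑ b : B, M (b, y) = 1) :
    IsClassicalMulti M ↔
      ∃ (n : ℕ) (G : Fin n → Matrix (Fin d) (Fin d) ℂ) (D : Fin n → B × Y → ℝ),
        (∀ μ, (G μ).PosSemidef) ∧ (∑ μ, G μ = 1) ∧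
        (∀ μ, D μ ∈ (multiPolytope M).extremePoints ℝ) ∧
        (∀ b : B, ∀ y : Y, M (b, y) = ∑ μ, D μ (b, y) • G μ) := by
  constructor
  · rintro ⟨n, G, q, hG, hGsum, hq, hM⟩
    have hrep : ∀ l : Fin n, ∃ (k : ℕ) (w : Fin k → ℝ)
        (zz : Fin k → (B × Y → ℝ)), (∀ i, 0 ≤ w i) ∧ ∑ i, w i = 1 ∧
        (∀ i, zz i ∈ (multiPolytope M).extremePoints ℝ) ∧ ∑ i, w i • zz i = q l := by
      intro l
      obtain ⟨ι₀, i₀, w₀, z₀, h0, h1, h2, h3⟩ := mem_convexHull_iff_exists_fintype.mp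
        (mem_convexHull_extremePoints M _ (q l) (hq l) rfl)
      refine ⟨Fintype.card ι₀, w₀ ∘ (Fintype.equivFin ι₀).symm,
        z₀ ∘ (Fintype.equivFin ι₀).symm, fun i => h0 _, ?_, fun i => h2 _, ?_⟩
      · simp only [Function.comp_apply]
        rw [Equiv.sum_comp (Fintype.equivFin ι₀).symm w₀]; exact h1
      · simp only [Function.comp_apply]
        rw [Equiv.sum_comp (Fintype.equivFin ι₀).symm (fun i => w₀ i • z₀ i)]; exact h3
    choose k w zz hw0 hw1 hzE hsum using hrep
    refine ⟨Fintype.card (Σ l : Fin n, Fin (k l)),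
      fun μ => w ((Fintype.equivFin _).symm μ).1 ((Fintype.equivFin _).symm μ).2 •
        G ((Fintype.equivFin _).symm μ).1,
      fun μ => zz ((Fintype.equivFin _).symm μ).1 ((Fintype.equivFin _).symm μ).2,
      ?_, ?_, ?_, ?_⟩
    · intro μ; exact posSemidef_real_smul (hG _) (hw0 _ _)
    · calc (∑ μ : Fin (Fintype.card (Σ l : Fin n, Fin (k l))),
            w ((Fintype.equivFin _).symm μ).1 ((Fintype.equivFin _).symm μ).2 •
              G ((Fintype.equivFin _).symm μ).1)
          = ∑ t : Σ l : Fin n, Fin (k l), w t.1 t.2 • G t.1 :=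
            Equiv.sum_comp (Fintype.equivFin (Σ l : Fin n, Fin (k l))).symm
              (fun t => w t.1 t.2 • G t.1)
        _ = ∑ l, ∑ i : Fin (k l), w l i • G l := by
            rw [← Finset.univ_sigma_univ, Finset.sum_sigma]
        _ = ∑ l, G l := by
            refine Finset.sum_congr rfl fun l _ => ?_
            rw [← Finset.sum_smul, hw1 l, one_smul]
        _ = 1 := hGsum
    · intro μ; exact hzE _ _
    · intro b y
      calc M (b, y) = ∑ l, q l (b, y) • G l := hM b y
        _ = ∑ l, ∑ i : Fin (k l), zz l i (b, y) • (w l i • G l) := by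
            refine Finset.sum_congr rfl fun l _ => ?_
            have hql : q l (b, y) = ∑ i, w l i * zz l i (b, y) := by
              rw [← congrFun (hsum l) (b, y), Finset.sum_apply]
              exact Finset.sum_congr rfl fun i _ => rfl
            rw [hql, Finset.sum_smul]
            exact Finset.sum_congr rfl fun i _ => by
              rw [smul_smul, mul_comm]
        _ = ∑ t : Σ l : Fin n, Fin (k l), zz t.1 t.2 (b, y) • (w t.1 t.2 • G t.1) := by
            rw [← Finset.univ_sigma_univ, Finset.sum_sigma]
        _ = ∑ μ : Fin (Fintype.card (Σ l : Fin n, Fin (k l))),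
              zz ((Fintype.equivFin _).symm μ).1 ((Fintype.equivFin _).symm μ).2 (b, y) •
                (w ((Fintype.equivFin _).symm μ).1 ((Fintype.equivFin _).symm μ).2 •
                  G ((Fintype.equivFin _).symm μ).1) :=
            (Equiv.sum_comp (Fintype.equivFin (Σ l : Fin n, Fin (k l))).symm
              (fun t => zz t.1 t.2 (b, y) • (w t.1 t.2 • G t.1))).symm
  · rintro ⟨n, G, D, hG, hGsum, hD, hM⟩
    exact ⟨n, G, D, hG, hGsum, fun l => extremePoints_subset (hD l), hM⟩
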